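/- Let X be a distribution on ℝ^d with covariance Σ_X ⪯ σ²I, and let Y be a distribution with d_TV(X,Y) ≤ ε for ε ≤ 1/2. If Y also has covariance ⪯ σ²I, then ‖E[X] - E[Y]‖₂ ≤ O(σ√ε). -/

import Mathlib

set_option maxHeartbeats 1000000

open MeasureTheory
open scoped RealInnerProductSpace

lemma amgm_aux (t y : ℝ) (ht : 0 < t) : |y| ≤ (t * y ^ 2 + 1 / t) / 2 := by
  have h2 : 2 * t * |y| ≤ t ^ 2 * y ^ 2 + 1 := by
    nlinarith [sq_nonneg (t * |y| - 1), sq_abs y]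
  rw [le_div_iff₀ (by norm_num : (0:ℝ) < 2)]
  have h3 : |y| * 2 = (1 / t) * (2 * t * |y|) := by field_simp
  rw [h3]
  calc (1 / t) * (2 * t * |y|) ≤ (1 / t) * (t ^ 2 * y ^ 2 + 1) := by gcongr
    _ = t * y ^ 2 + 1 / t := by field_simp

lemma clamp_abs_aux (T y : ℝ) (hT : 0 ≤ T) : |y - max (-T) (min y T)| ≤ |y| := by
  rcases le_total y (-T) with h | h
  · rw [min_eq_left (by linarith), max_eq_left h]
    rw [abs_of_nonpos (by linarith), abs_of_nonpos (by linarith)]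
    linarith
  · rcases le_total T y with h2 | h2
    · rw [min_eq_right h2, max_eq_right (by linarith)]
      rw [abs_of_nonneg (by linarith), abs_of_nonneg (by linarith)]
      linarith
    · rw [min_eq_left h2, max_eq_right h, sub_self, abs_zero]
      exact abs_nonneg y

/-- Truncation-error bound via AM-GM: the integral of `|g - clamp g|` is at most
`(t ∫g² + μ{T² ≤ g²}/t)/2`. -/
lemma trunc_err_bound {X : Type*} [MeasurableSpace X] (ρ : Measure X) [IsProbabilityMeasure ρ]
    (g : X → ℝ) (hg : Measurable g) (hgint : Integrable g ρ)
    (hg2 : Integrable (fun x => g x ^ 2) ρ) (T t : ℝ) (hT : 0 ≤ T) (ht : 0 < t) :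
    ∫ x, |g x - max (-T) (min (g x) T)| ∂ρ ≤
      (t * ∫ x, g x ^ 2 ∂ρ + (ρ {x | T ^ 2 ≤ g x ^ 2}).toReal * (1 / t)) / 2 := by
  set A : Set X := {x | T ^ 2 ≤ g x ^ 2} with hA
  have hAmeas : MeasurableSet A := measurableSet_le measurable_const (hg.pow_const 2)
  set c : X → ℝ := fun x => max (-T) (min (g x) T) with hc
  have hcmeas : Measurable c := measurable_const.max ((hg.min measurable_const))
  have hcint : Integrable c ρ := by
    refine (integrable_const T).mono' hcmeas.aestronglyMeasurable ?_
    refine Filter.Eventually.of_forall fun x => ?_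
    rw [Real.norm_eq_abs, abs_le]
    exact ⟨le_max_left _ _, max_le (by linarith) (min_le_right _ _)⟩
  have hpt : ∀ x, |g x - c x| ≤ (t * g x ^ 2 + A.indicator (fun _ => 1 / t) x) / 2 := by
    intro x
    by_cases hx : x ∈ A
    · rw [Set.indicator_of_mem hx]
      exact (clamp_abs_aux T (g x) hT).trans (amgm_aux t (g x) ht)
    · have hgT : g x ^ 2 < T ^ 2 := lt_of_not_ge hx
      have h1 : g x ≤ T := by nlinarith
      have h2 : -T ≤ g x := by nlinarith
      rw [Set.indicator_of_notMem hx]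
      have : c x = g x := by rw [hc]; simp only []; rw [min_eq_left h1, max_eq_right h2]
      rw [this, sub_self, abs_zero]
      positivity
  have hRint : Integrable (fun x => (t * g x ^ 2 + A.indicator (fun _ => 1 / t) x) / 2) ρ :=
    ((hg2.const_mul t).add ((integrable_const (1 / t)).indicator hAmeas)).div_const 2
  calc ∫ x, |g x - c x| ∂ρ ≤ ∫ x, (t * g x ^ 2 + A.indicator (fun _ => 1 / t) x) / 2 ∂ρ :=
        integral_mono (hgint.sub hcint).abs hRint hpt
    _ = (t * ∫ x, g x ^ 2 ∂ρ + (ρ A).toReal * (1 / t)) / 2 := by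
        rw [integral_div, integral_add (hg2.const_mul t)
          ((integrable_const (1 / t)).indicator hAmeas), integral_const_mul,
          integral_indicator_const _ hAmeas, measureReal_def, smul_eq_mul, mul_comm]

/-- TV distance bounds the difference of integrals of `[0,T]`-valued functions by `ε T`. -/
lemma tv_int_bound {X : Type*} [MeasurableSpace X] (μ ν : Measure X)
    [IsProbabilityMeasure μ] [IsProbabilityMeasure ν] (u : X → ℝ) (T ε : ℝ)
    (hT : 0 ≤ T) (hu : Measurable u) (h0 : ∀ x, 0 ≤ u x) (h1 : ∀ x, u x ≤ T)
    (hTV : ∀ A : Set X, MeasurableSet A → |(μ A).toReal - (ν A).toReal| ≤ ε) :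
    ∫ x, u x ∂μ - ∫ x, u x ∂ν ≤ ε * T := by
  have hbd : ∀ (ρ : Measure X) [IsProbabilityMeasure ρ], Integrable u ρ := by
    intro ρ _
    refine (integrable_const T).mono' hu.aestronglyMeasurable ?_
    exact Filter.Eventually.of_forall fun x => by
      rw [Real.norm_eq_abs, abs_of_nonneg (h0 x)]; exact h1 x
  have key : ∀ (ρ : Measure X) [IsProbabilityMeasure ρ],
      ∫ x, u x ∂ρ = ∫ t in Set.Ioc 0 T, ((ρ {a | t ≤ u a}).toReal) :=
    fun ρ _ => (hbd ρ).integral_eq_integral_Ioc_meas_le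
      (Filter.Eventually.of_forall h0) (Filter.Eventually.of_forall h1)
  have hm : ∀ ρ : Measure X, Measurable fun t : ℝ => (ρ {a | t ≤ u a}).toReal :=
    fun ρ => Measurable.ennreal_toReal <| Antitone.measurable
      (fun s t hst => measure_mono fun a ha => le_trans hst ha)
  have hFint : ∀ (ρ : Measure X) [IsProbabilityMeasure ρ],
      IntegrableOn (fun t : ℝ => (ρ {a | t ≤ u a}).toReal) (Set.Ioc 0 T) := by
    intro ρ _
    refine Measure.integrableOn_of_bounded (M := 1) measure_Ioc_lt_top.ne
      (hm ρ).aestronglyMeasurable ?_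
    refine Filter.Eventually.of_forall fun t => ?_
    rw [Real.norm_eq_abs, abs_of_nonneg ENNReal.toReal_nonneg]
    calc (ρ {a | t ≤ u a}).toReal ≤ (ρ Set.univ).toReal :=
          ENNReal.toReal_mono (measure_ne_top ρ _) (measure_mono (Set.subset_univ _))
      _ = 1 := by simp
  rw [key μ, key ν, ← integral_sub (hFint μ) (hFint ν)]
  calc ∫ t in Set.Ioc 0 T, ((μ {a | t ≤ u a}).toReal - (ν {a | t ≤ u a}).toReal)
      ≤ ∫ t in Set.Ioc 0 T, ε := by
        refine setIntegral_mono_on ((hFint μ).sub (hFint ν))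
          (integrableOn_const measure_Ioc_lt_top.ne) measurableSet_Ioc ?_
        intro t _
        exact (le_abs_self _).trans (hTV _ (hu measurableSet_Ici))
    _ = ε * T := by
        rw [setIntegral_const, smul_eq_mul, Real.volume_real_Ioc_of_le (by linarith)]
        ring


/-- If `P` and `Q` are probability distributions on `ℝ^d`, both with covariance
`⪯ σ²I`, and total variation distance at most `ε ≤ 1/2`, then their means differ
by at most `O(σ√ε)` in `ℓ₂`-norm. -/
theorem stmt5 :
    ∃ C : ℝ, 0 < C ∧ ∀ (d : ℕ) (P Q : Measure (EuclideanSpace ℝ (Fin d)))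
      (_ : IsProbabilityMeasure P) (_ : IsProbabilityMeasure Q) (σ ε : ℝ),
      0 ≤ σ → 0 ≤ ε → ε ≤ 1 / 2 →
      Integrable (fun x => x) P → Integrable (fun x => x) Q →
      (∀ v : EuclideanSpace ℝ (Fin d),
        Integrable (fun x => ⟪v, x - ∫ y, y ∂P⟫ ^ 2) P ∧
        Integrable (fun x => ⟪v, x - ∫ y, y ∂Q⟫ ^ 2) Q) →
      (∀ v : EuclideanSpace ℝ (Fin d), ‖v‖ = 1 →
        (∫ x, ⟪v, x - ∫ y, y ∂P⟫ ^ 2 ∂P) ≤ σ ^ 2) →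
      (∀ v : EuclideanSpace ℝ (Fin d), ‖v‖ = 1 →
        (∫ x, ⟪v, x - ∫ y, y ∂Q⟫ ^ 2 ∂Q) ≤ σ ^ 2) →
      (∀ A : Set (EuclideanSpace ℝ (Fin d)), MeasurableSet A →
        |(P A).toReal - (Q A).toReal| ≤ ε) →
      ‖(∫ x, x ∂P) - ∫ x, x ∂Q‖ ≤ C * σ * Real.sqrt ε := by
  refine ⟨100, by norm_num, ?_⟩
  intro d P Q hP hQ σ ε hσ hε hε2 hIP hIQ hInt2 hVarP hVarQ hTV
  have hRHS : (0:ℝ) ≤ 100 * σ * Real.sqrt ε := by positivity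
  -- Case ε = 0 : the measures agree.
  rcases eq_or_lt_of_le hε with hε0 | hε0
  · have hPQ : P = Q := by
      ext A hA
      have h := hTV A hA
      rw [← hε0] at h
      have h3 : |(P A).toReal - (Q A).toReal| = 0 :=
        le_antisymm h (abs_nonneg _)
      have h4 := abs_eq_zero.mp h3
      have h2 : (P A).toReal = (Q A).toReal := by linarith
      exact (ENNReal.toReal_eq_toReal_iff' (measure_ne_top P A) (measure_ne_top Q A)).mp h2
    rw [hPQ, sub_self, norm_zero]
    exact hRHS
  set μP := ∫ x, x ∂P with hμPdef
  set μQ := ∫ x, x ∂Q with hμQdef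
  rcases eq_or_ne (μP - μQ) 0 with hD | hD
  · rw [hD, norm_zero]; exact hRHS
  have hDpos : 0 < ‖μP - μQ‖ := norm_pos_iff.mpr hD
  set δ := ‖μP - μQ‖ with hδdef
  set v : EuclideanSpace ℝ (Fin d) := δ⁻¹ • (μP - μQ) with hv
  have hvnorm : ‖v‖ = 1 := by
    rw [hv, norm_smul, norm_inv, Real.norm_eq_abs, abs_of_pos hDpos, ← hδdef]
    exact inv_mul_cancel₀ hDpos.ne'
  have hδinner : ⟪v, μP - μQ⟫ = δ := by
    rw [hv, real_inner_smul_left, real_inner_self_eq_norm_sq, ← hδdef, sq,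
      inv_mul_cancel_left₀ hDpos.ne']
  -- basic integrability and mean facts along v
  have hfP : Integrable (fun x => ⟪v, x⟫) P := by
    simpa using (innerSL ℝ v).integrable_comp hIP
  have hfQ : Integrable (fun x => ⟪v, x⟫) Q := by
    simpa using (innerSL ℝ v).integrable_comp hIQ
  have haP : ∫ x, ⟪v, x⟫ ∂P = ⟪v, μP⟫ := by
    simpa using (innerSL ℝ v).integral_comp_comm hIP
  have haQ : ∫ x, ⟪v, x⟫ ∂Q = ⟪v, μQ⟫ := by
    simpa using (innerSL ℝ v).integral_comp_comm hIQ
  have hIh2P : Integrable (fun x => (⟪v, x⟫ - ⟪v, μP⟫) ^ 2) P := by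
    have h0 := (hInt2 v).1
    simp only [inner_sub_right] at h0
    exact h0
  have hIg2Q : Integrable (fun x => (⟪v, x⟫ - ⟪v, μQ⟫) ^ 2) Q := by
    have h0 := (hInt2 v).2
    simp only [inner_sub_right] at h0
    exact h0
  have hP2 : ∫ x, (⟪v, x⟫ - ⟪v, μP⟫) ^ 2 ∂P ≤ σ ^ 2 := by
    have h0 := hVarP v hvnorm
    simp only [inner_sub_right] at h0
    exact h0
  have hQ2 : ∫ x, (⟪v, x⟫ - ⟪v, μQ⟫) ^ 2 ∂Q ≤ σ ^ 2 := by
    have h0 := hVarQ v hvnorm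
    simp only [inner_sub_right] at h0
    exact h0
  set a := ⟪v, μP⟫ with hadef
  set b := ⟪v, μQ⟫ with hbdef
  have hab : a - b = δ := by rw [hadef, hbdef, ← inner_sub_right, hδinner]
  have hgintP : Integrable (fun x => ⟪v, x⟫ - b) P := hfP.sub (integrable_const b)
  have hgintQ : Integrable (fun x => ⟪v, x⟫ - b) Q := hfQ.sub (integrable_const b)
  have hhintP : Integrable (fun x => ⟪v, x⟫ - a) P := hfP.sub (integrable_const a)
  have hgP : ∫ x, (⟪v, x⟫ - b) ∂P = δ := by
    rw [integral_sub hfP (integrable_const b), haP, integral_const, measureReal_def, measure_univ,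
      ENNReal.toReal_one, one_smul]
    exact hab
  have hgQ : ∫ x, (⟪v, x⟫ - b) ∂Q = 0 := by
    rw [integral_sub hfQ (integrable_const b), haQ, integral_const, measureReal_def, measure_univ,
      ENNReal.toReal_one, one_smul, sub_self]
  have hhP : ∫ x, (⟪v, x⟫ - a) ∂P = 0 := by
    rw [integral_sub hfP (integrable_const a), haP, integral_const, measureReal_def, measure_univ,
      ENNReal.toReal_one, one_smul, sub_self]
  have hgx : (fun x : EuclideanSpace ℝ (Fin d) => (⟪v, x⟫ - b) ^ 2)
      = fun x => (⟪v, x⟫ - a) ^ 2 + (2 * δ * (⟪v, x⟫ - a) + δ ^ 2) := by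
    funext x
    have haδ : a = b + δ := by linarith
    rw [haδ]; ring
  have hlin : Integrable (fun x => 2 * δ * (⟪v, x⟫ - a) + δ ^ 2) P :=
    (hhintP.const_mul (2 * δ)).add (integrable_const (δ ^ 2))
  have hIg2P : Integrable (fun x => (⟪v, x⟫ - b) ^ 2) P := by
    rw [hgx]
    exact hIh2P.add hlin
  have hSP : ∫ x, (⟪v, x⟫ - b) ^ 2 ∂P ≤ (σ + δ) ^ 2 := by
    rw [hgx, integral_add hIh2P hlin,
      integral_add (hhintP.const_mul (2 * δ)) (integrable_const (δ ^ 2)), integral_const_mul, hhP,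
      integral_const, measureReal_def, measure_univ, ENNReal.toReal_one, one_smul]
    nlinarith [hP2, hσ, hDpos]
  have hfm : Measurable (fun x : EuclideanSpace ℝ (Fin d) => ⟪v, x⟫) :=
    (continuous_const.inner continuous_id).measurable
  -- Case σ = 0 : both measures are degenerate along v, contradiction with μP ≠ μQ.
  rcases eq_or_lt_of_le hσ with hσ0 | hσ0
  · exfalso
    have hσ2 : σ ^ 2 = 0 := by rw [← hσ0]; ring
    have hP2' : ∫ x, (⟪v, x⟫ - a) ^ 2 ∂P = 0 :=
      le_antisymm (hσ2 ▸ hP2) (integral_nonneg fun x => sq_nonneg _)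
    have hQ2' : ∫ x, (⟪v, x⟫ - b) ^ 2 ∂Q = 0 :=
      le_antisymm (hσ2 ▸ hQ2) (integral_nonneg fun x => sq_nonneg _)
    have haeP : ∀ᵐ x ∂P, ⟪v, x⟫ = a := by
      have h0 := (integral_eq_zero_iff_of_nonneg (fun x => sq_nonneg (⟪v, x⟫ - a)) hIh2P).mp hP2'
      filter_upwards [h0] with x hx
      have : ⟪v, x⟫ - a = 0 := by
        have := pow_eq_zero_iff (n := 2) (by norm_num) |>.mp hx
        exact this
      linarith
    have haeQ : ∀ᵐ x ∂Q, ⟪v, x⟫ = b := by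
      have h0 := (integral_eq_zero_iff_of_nonneg (fun x => sq_nonneg (⟪v, x⟫ - b)) hIg2Q).mp hQ2'
      filter_upwards [h0] with x hx
      have : ⟪v, x⟫ - b = 0 := by
        have := pow_eq_zero_iff (n := 2) (by norm_num) |>.mp hx
        exact this
      linarith
    have hAm : MeasurableSet {x : EuclideanSpace ℝ (Fin d) | ⟪v, x⟫ = a} :=
      measurableSet_eq_fun hfm measurable_const
    have hBm : MeasurableSet {x : EuclideanSpace ℝ (Fin d) | ⟪v, x⟫ = b} :=
      measurableSet_eq_fun hfm measurable_const
    have hPA : P {x | ⟪v, x⟫ = a} = 1 := by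
      rw [← prob_compl_eq_zero_iff hAm, Set.compl_setOf]
      exact ae_iff.mp haeP
    have hQB : Q {x | ⟪v, x⟫ = b} = 1 := by
      rw [← prob_compl_eq_zero_iff hBm, Set.compl_setOf]
      exact ae_iff.mp haeQ
    have hQAne : Q {x | ⟪v, x⟫ = a} ≠ 0 := by
      have h2 := hTV _ hAm
      rw [hPA, ENNReal.toReal_one, abs_le] at h2
      intro hc
      rw [hc, ENNReal.toReal_zero] at h2
      linarith [h2.2]
    have hint : Q ({x | ⟪v, x⟫ = a} ∩ {x | ⟪v, x⟫ = b}) ≠ 0 := by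
      rw [measure_inter_conull ((prob_compl_eq_zero_iff hBm).mpr hQB)]
      exact hQAne
    obtain ⟨x, hx1, hx2⟩ := MeasureTheory.nonempty_of_measure_ne_zero hint
    have : a = b := by rw [← hx1, ← hx2]
    linarith [hab, hDpos]
  -- Main case: σ > 0
  set s := Real.sqrt ε with hsdef
  have hs0 : 0 < s := Real.sqrt_pos.mpr hε0
  have hs2 : s ^ 2 = ε := Real.sq_sqrt hε
  have hs2' : s ^ 2 ≤ 1 / 2 := by rw [hs2]; exact hε2
  set T := 2 * σ / s with hTdef
  have hT0 : 0 < T := by positivity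
  have hgm : Measurable (fun x : EuclideanSpace ℝ (Fin d) => ⟪v, x⟫ - b) :=
    hfm.sub measurable_const
  set A : Set (EuclideanSpace ℝ (Fin d)) := {x | T ^ 2 ≤ (⟪v, x⟫ - b) ^ 2} with hAdef
  have hAm : MeasurableSet A := measurableSet_le measurable_const (hgm.pow_const 2)
  -- Chebyshev for Q, transferred to P via the TV bound
  have hQA : (Q A).toReal ≤ s ^ 2 / 4 := by
    have hch := mul_meas_ge_le_integral_of_nonneg
      (Filter.Eventually.of_forall fun x => sq_nonneg (⟪v, x⟫ - b)) hIg2Q (T ^ 2)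
    have h4 : T ^ 2 * (Q A).toReal ≤ σ ^ 2 := le_trans hch hQ2
    have hT2 : T ^ 2 = 4 * σ ^ 2 / s ^ 2 := by rw [hTdef]; field_simp; ring
    rw [hT2, div_mul_eq_mul_div, div_le_iff₀ (by positivity : (0:ℝ) < s ^ 2)] at h4
    nlinarith [pow_pos hσ0 2, ENNReal.toReal_nonneg (a := Q A)]
  have hPA : (P A).toReal ≤ s ^ 2 / 4 + s ^ 2 := by
    have h2 := (abs_le.mp (hTV A hAm)).2
    linarith [hQA, hs2.le, hs2.ge]
  -- the clamped function and its decomposition into two [0,T]-valued pieces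
  set c : EuclideanSpace ℝ (Fin d) → ℝ := fun x => max (-T) (min (⟪v, x⟫ - b) T) with hcdef
  have hcm : Measurable c := measurable_const.max (hgm.min measurable_const)
  have hcb : ∀ x, |c x| ≤ T := by
    intro x
    rw [abs_le]
    exact ⟨le_max_left _ _, max_le (by linarith) (min_le_right _ _)⟩
  have hcintP : Integrable c P :=
    (integrable_const T).mono' hcm.aestronglyMeasurable
      (Filter.Eventually.of_forall fun x => by rw [Real.norm_eq_abs]; exact hcb x)
  have hcintQ : Integrable c Q :=
    (integrable_const T).mono' hcm.aestronglyMeasurable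
      (Filter.Eventually.of_forall fun x => by rw [Real.norm_eq_abs]; exact hcb x)
  set φ : EuclideanSpace ℝ (Fin d) → ℝ := fun x => max 0 (min (⟪v, x⟫ - b) T) with hφdef
  set ψ : EuclideanSpace ℝ (Fin d) → ℝ := fun x => max 0 (min (-(⟪v, x⟫ - b)) T) with hψdef
  have hφm : Measurable φ := measurable_const.max (hgm.min measurable_const)
  have hψm : Measurable ψ := measurable_const.max (hgm.neg.min measurable_const)
  have hφ0 : ∀ x, 0 ≤ φ x := fun x => le_max_left _ _
  have hψ0 : ∀ x, 0 ≤ ψ x := fun x => le_max_left _ _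
  have hφT : ∀ x, φ x ≤ T := fun x => max_le hT0.le (min_le_right _ _)
  have hψT : ∀ x, ψ x ≤ T := fun x => max_le hT0.le (min_le_right _ _)
  have hcφψ : ∀ x, c x = φ x - ψ x := by
    intro x
    have hTnn := hT0.le
    simp only [hcdef, hφdef, hψdef, min_def, max_def]
    split_ifs <;> linarith
  have hφintP : Integrable φ P := (integrable_const T).mono' hφm.aestronglyMeasurable
    (Filter.Eventually.of_forall fun x => by
      rw [Real.norm_eq_abs, abs_of_nonneg (hφ0 x)]; exact hφT x)
  have hφintQ : Integrable φ Q := (integrable_const T).mono' hφm.aestronglyMeasurable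
    (Filter.Eventually.of_forall fun x => by
      rw [Real.norm_eq_abs, abs_of_nonneg (hφ0 x)]; exact hφT x)
  have hψintP : Integrable ψ P := (integrable_const T).mono' hψm.aestronglyMeasurable
    (Filter.Eventually.of_forall fun x => by
      rw [Real.norm_eq_abs, abs_of_nonneg (hψ0 x)]; exact hψT x)
  have hψintQ : Integrable ψ Q := (integrable_const T).mono' hψm.aestronglyMeasurable
    (Filter.Eventually.of_forall fun x => by
      rw [Real.norm_eq_abs, abs_of_nonneg (hψ0 x)]; exact hψT x)
  have htvφ : ∫ x, φ x ∂P - ∫ x, φ x ∂Q ≤ ε * T :=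
    tv_int_bound P Q φ T ε hT0.le hφm hφ0 hφT hTV
  have htvψ : ∫ x, ψ x ∂Q - ∫ x, ψ x ∂P ≤ ε * T :=
    tv_int_bound Q P ψ T ε hT0.le hψm hψ0 hψT
      (fun B hB => by rw [abs_sub_comm]; exact hTV B hB)
  have hcPQ : ∫ x, c x ∂P - ∫ x, c x ∂Q ≤ 2 * (ε * T) := by
    have e1 : ∫ x, c x ∂P = ∫ x, φ x ∂P - ∫ x, ψ x ∂P := by
      rw [← integral_sub hφintP hψintP]
      exact integral_congr_ae (Filter.Eventually.of_forall fun x => hcφψ x)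
    have e2 : ∫ x, c x ∂Q = ∫ x, φ x ∂Q - ∫ x, ψ x ∂Q := by
      rw [← integral_sub hφintQ hψintQ]
      exact integral_congr_ae (Filter.Eventually.of_forall fun x => hcφψ x)
    rw [e1, e2]; linarith
  have hεT : ε * T = 2 * (σ * s) := by
    rw [hTdef, ← hs2]; field_simp
  -- truncation error bounds via AM-GM and Chebyshev
  have htruncP : ∫ x, |(⟪v, x⟫ - b) - max (-T) (min (⟪v, x⟫ - b) T)| ∂P ≤
      ((9/8) * s / (σ + δ) * ∫ x, (⟪v, x⟫ - b) ^ 2 ∂P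
        + (P A).toReal * (1 / ((9/8) * s / (σ + δ)))) / 2 :=
    trunc_err_bound P (fun x => ⟪v, x⟫ - b) hgm hgintP hIg2P T
      ((9/8) * s / (σ + δ)) hT0.le (by positivity)
  have htruncQ : ∫ x, |(⟪v, x⟫ - b) - max (-T) (min (⟪v, x⟫ - b) T)| ∂Q ≤
      (s / (2 * σ) * ∫ x, (⟪v, x⟫ - b) ^ 2 ∂Q
        + (Q A).toReal * (1 / (s / (2 * σ)))) / 2 :=
    trunc_err_bound Q (fun x => ⟪v, x⟫ - b) hgm hgintQ hIg2Q T
      (s / (2 * σ)) hT0.le (by positivity)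
  have hbP : ∫ x, |(⟪v, x⟫ - b) - c x| ∂P ≤ 161/144 * (s * (σ + δ)) := by
    refine le_trans htruncP ?_
    have step : (9/8) * s / (σ + δ) * (∫ x, (⟪v, x⟫ - b) ^ 2 ∂P)
          + (P A).toReal * (1 / ((9/8) * s / (σ + δ)))
        ≤ (9/8) * s / (σ + δ) * (σ + δ) ^ 2
          + (s ^ 2 / 4 + s ^ 2) * (1 / ((9/8) * s / (σ + δ))) := by
      gcongr
    have e3 : (9/8) * s / (σ + δ) * (σ + δ) ^ 2
        + (s ^ 2 / 4 + s ^ 2) * (1 / ((9/8) * s / (σ + δ))) = 2 * (161/144 * (s * (σ + δ))) := by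
      field_simp
      ring
    linarith [step]
  have hbQ : ∫ x, |(⟪v, x⟫ - b) - c x| ∂Q ≤ σ * s / 2 := by
    refine le_trans htruncQ ?_
    have step : s / (2 * σ) * (∫ x, (⟪v, x⟫ - b) ^ 2 ∂Q)
          + (Q A).toReal * (1 / (s / (2 * σ)))
        ≤ s / (2 * σ) * σ ^ 2 + (s ^ 2 / 4) * (1 / (s / (2 * σ))) := by
      gcongr
    have e3 : s / (2 * σ) * σ ^ 2 + (s ^ 2 / 4) * (1 / (s / (2 * σ))) = 2 * (σ * s / 2) := by
      field_simp
      ring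
    linarith [step]
  -- assemble everything
  have hdP : Integrable (fun x => (⟪v, x⟫ - b) - c x) P := hgintP.sub hcintP
  have hdQ : Integrable (fun x => (⟪v, x⟫ - b) - c x) Q := hgintQ.sub hcintQ
  have hdQ' : Integrable (fun x => c x - (⟪v, x⟫ - b)) Q := hcintQ.sub hgintQ
  have hsplit : δ ≤ ∫ x, c x ∂P + ∫ x, |(⟪v, x⟫ - b) - c x| ∂P := by
    have e4 : ∫ x, (⟪v, x⟫ - b) ∂P = ∫ x, c x ∂P + ∫ x, ((⟪v, x⟫ - b) - c x) ∂P := by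
      rw [← integral_add hcintP hdP]
      exact integral_congr_ae (Filter.Eventually.of_forall fun x => by ring)
    have e5 : ∫ x, ((⟪v, x⟫ - b) - c x) ∂P ≤ ∫ x, |(⟪v, x⟫ - b) - c x| ∂P :=
      integral_mono hdP hdP.abs fun x => le_abs_self _
    linarith [hgP, e4, e5]
  have hcQle : ∫ x, c x ∂Q ≤ σ * s / 2 := by
    have e6 : ∫ x, c x ∂Q = ∫ x, (c x - (⟪v, x⟫ - b)) ∂Q := by
      rw [integral_sub hcintQ hgintQ, hgQ, sub_zero]
    have e7 : ∫ x, (c x - (⟪v, x⟫ - b)) ∂Q ≤ ∫ x, |(⟪v, x⟫ - b) - c x| ∂Q := by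
      refine integral_mono hdQ' hdQ.abs fun x => ?_
      rw [abs_sub_comm]
      exact le_abs_self _
    linarith [hbQ]
  have hfinal : δ ≤ σ * s / 2 + 2 * (2 * (σ * s)) + 161/144 * (s * (σ + δ)) := by
    linarith only [hsplit, hbP, hcPQ, hcQle, hεT]
  have hsb : s ≤ 99 / 140 := by linarith only [sq_nonneg (s - 7/10), hs2']
  have h9 : (161:ℝ)/144 * s ≤ 4/5 := by linarith only [hsb]
  have hcoef : 161/144 * s * δ ≤ 4/5 * δ := by
    calc 161/144 * s * δ = (161/144 * s) * δ := by ring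
      _ ≤ 4/5 * δ := mul_le_mul_of_nonneg_right h9 hDpos.le
  linarith only [hfinal, hcoef, mul_nonneg hσ0.le hs0.le, hDpos.le]
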